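/- Let f be an expansive homeomorphism of the compact metric space M with expansivity constant ρ. Then for every x ∈ M, W^s(x) = {y ∈ M : there exists N such that dist(f^n x, f^n y) ≤ ρ for all n ≥ N}, and W^u(x) = {y ∈ M : there exists N such that dist(f^{-n} x, f^{-n} y) ≤ ρ for all n ≥ N}. -/

import Mathlib

open Set Filter Metric Topology

variable {M : Type*} [MetricSpace M] [CompactSpace M]

/-- `f` is expansive with expansivity constant `ρ`: if two orbits stay `ρ`-close for all
integer times, the points coincide. -/
def IsExpansiveWith (f : Equiv.Perm M) (ρ : ℝ) : Prop :=
  ∀ x y : M, (∀ n : ℤ, dist ((f ^ n) x) ((f ^ n) y) ≤ ρ) → x = y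

/-- The stable set `W^s(x)`. -/
def stableSet (f : Equiv.Perm M) (x : M) : Set M :=
  {y : M | Tendsto (fun n : ℤ => dist ((f ^ n) x) ((f ^ n) y)) atTop (𝓝 0)}

/-- The unstable set `W^u(x)`. -/
def unstableSet (f : Equiv.Perm M) (x : M) : Set M :=
  {y : M | Tendsto (fun n : ℤ => dist ((f ^ n) x) ((f ^ n) y)) atBot (𝓝 0)}

/-- The `ε`-stable set `W^s_ε(x)`. -/
def epsStable (f : Equiv.Perm M) (ε : ℝ) (x : M) : Set M :=
  {y : M | ∀ n : ℤ, 0 ≤ n → dist ((f ^ n) x) ((f ^ n) y) ≤ ε}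

/-- The `ε`-unstable set `W^u_ε(x)`. -/
def epsUnstable (f : Equiv.Perm M) (ε : ℝ) (x : M) : Set M :=
  {y : M | ∀ n : ℤ, n ≤ 0 → dist ((f ^ n) x) ((f ^ n) y) ≤ ε}

/-- Shadowing property: every `δ`-pseudo-orbit is `ε`-shadowed by a true orbit. -/
def HasShadowing (f : Equiv.Perm M) : Prop :=
  ∀ ε : ℝ, 0 < ε → ∃ δ : ℝ, 0 < δ ∧ ∀ y : ℤ → M,
    (∀ n : ℤ, dist (f (y n)) (y (n + 1)) < δ) →
      ∃ z : M, ∀ n : ℤ, dist ((f ^ n) z) (y n) ≤ ε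

/-- A rectangle: a nonempty set of diameter `< δ` closed under the bracket operation. -/
def IsRectangle (δ : ℝ) (br : M → M → M) (R : Set M) : Prop :=
  R.Nonempty ∧ Metric.diam R < δ ∧ ∀ x ∈ R, ∀ y ∈ R, br x y ∈ R

/-- Stable border `∂^s R`: points of `R` that are not interior points of
`W^u(x,R) = W^u_ε(x) ∩ R` in the subspace topology of `W^u_ε(x)`. -/
def stableBorder (f : Equiv.Perm M) (ε : ℝ) (R : Set M) : Set M :=
  {x : M | x ∈ R ∧ ¬ ∃ U : Set M, IsOpen U ∧ x ∈ U ∧ U ∩ epsUnstable f ε x ⊆ R}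

/-- Unstable border `∂^u R`: points of `R` that are not interior points of
`W^s(x,R) = W^s_ε(x) ∩ R` in the subspace topology of `W^s_ε(x)`. -/
def unstableBorder (f : Equiv.Perm M) (ε : ℝ) (R : Set M) : Set M :=
  {x : M | x ∈ R ∧ ¬ ∃ U : Set M, IsOpen U ∧ x ∈ U ∧ U ∩ epsStable f ε x ⊆ R}

/-- A Markov partition: a finite family of proper rectangles covering `M`, with pairwise
disjoint interiors, satisfying the Markov inclusions for the invariant fibers. -/
def IsMarkovPartition (f : Equiv.Perm M) (ε δ : ℝ) (br : M → M → M) {m : ℕ}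
    (R : Fin m → Set M) : Prop :=
  (∀ i, IsRectangle δ br (R i)) ∧
  (∀ i, R i = closure (interior (R i))) ∧
  (⋃ i, R i) = Set.univ ∧
  (∀ i j, i ≠ j → interior (R i) ∩ interior (R j) = ∅) ∧
  ∀ i j, ∀ x ∈ interior (R i) ∩ ⇑f ⁻¹' interior (R j),
    ⇑f '' (epsStable f ε x ∩ R i) ⊆ epsStable f ε (f x) ∩ R j ∧
    epsUnstable f ε (f x) ∩ R j ⊆ ⇑f '' (epsUnstable f ε x ∩ R i)


set_option linter.unusedSectionVars false in
lemma cont_zpow (f : Equiv.Perm M) (hf : Continuous ⇑f) (hf' : Continuous ⇑f.symm)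
    (m : ℤ) : Continuous ⇑(f ^ m) := by
  induction m using Int.induction_on with
  | zero => simpa using continuous_id
  | succ n ih =>
    rw [zpow_add_one]
    exact (show ⇑(f ^ (n : ℤ) * f) = ⇑(f ^ (n : ℤ)) ∘ ⇑f from rfl) ▸ ih.comp hf
  | pred n ih =>
    rw [zpow_sub_one]
    exact (show ⇑(f ^ (-n : ℤ) * f⁻¹) = ⇑(f ^ (-n : ℤ)) ∘ ⇑f.symm from rfl) ▸ ih.comp hf'

lemma key_tendsto (f : Equiv.Perm M) (hf : Continuous ⇑f) (hf' : Continuous ⇑f.symm)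
    (ρ : ℝ) (hexp : IsExpansiveWith f ρ) (x y : M) (N : ℤ)
    (h : ∀ n : ℤ, N ≤ n → dist ((f ^ n) x) ((f ^ n) y) ≤ ρ) :
    Tendsto (fun n : ℤ => dist ((f ^ n) x) ((f ^ n) y)) atTop (𝓝 0) := by
  set u : ℤ → ℝ := fun n => dist ((f ^ n) x) ((f ^ n) y) with hu
  by_contra hT
  rw [Metric.tendsto_atTop] at hT
  push_neg at hT
  obtain ⟨ε, hε, hfreq⟩ := hT
  choose g hg₁ hg₂ using hfreq
  set n : ℕ → ℤ := fun k => g (k : ℤ) with hn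
  have hnk : ∀ k : ℕ, (k : ℤ) ≤ n k := fun k => hg₁ _
  have hεu : ∀ k : ℕ, ε ≤ u (n k) := by
    intro k
    have := hg₂ (k : ℤ)
    have h0 : 0 ≤ u (g (k : ℤ)) := dist_nonneg
    simpa [Real.dist_eq, abs_of_nonneg h0] using this
  have hnt : Tendsto n atTop atTop :=
    tendsto_atTop_mono hnk tendsto_natCast_atTop_atTop
  obtain ⟨q, -, φ, hφ, hlim⟩ := isCompact_univ.tendsto_subseq
    (x := fun k : ℕ => (((f ^ n k) x : M), ((f ^ n k) y : M))) (fun k => mem_univ _)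
  have hzx : Tendsto (fun k => (f ^ n (φ k)) x) atTop (𝓝 q.1) :=
    ((continuous_fst.tendsto q).comp hlim)
  have hzy : Tendsto (fun k => (f ^ n (φ k)) y) atTop (𝓝 q.2) :=
    ((continuous_snd.tendsto q).comp hlim)
  have hnφ : Tendsto (fun k => n (φ k)) atTop atTop := hnt.comp hφ.tendsto_atTop
  have hqρ : ∀ m : ℤ, dist ((f ^ m) q.1) ((f ^ m) q.2) ≤ ρ := by
    intro m
    have hc := cont_zpow f hf hf' m
    have h1 : Tendsto (fun k => (f ^ m) ((f ^ n (φ k)) x)) atTop (𝓝 ((f ^ m) q.1)) :=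
      (hc.tendsto q.1).comp hzx
    have h2 : Tendsto (fun k => (f ^ m) ((f ^ n (φ k)) y)) atTop (𝓝 ((f ^ m) q.2)) :=
      (hc.tendsto q.2).comp hzy
    have hdist : Tendsto (fun k => dist ((f ^ m) ((f ^ n (φ k)) x)) ((f ^ m) ((f ^ n (φ k)) y)))
        atTop (𝓝 (dist ((f ^ m) q.1) ((f ^ m) q.2))) := h1.dist h2
    refine le_of_tendsto hdist ?_
    have hev : ∀ᶠ k in atTop, N - m ≤ n (φ k) := hnφ.eventually_ge_atTop _
    filter_upwards [hev] with k hk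
    have hcomp : ∀ w : M, (f ^ m) ((f ^ n (φ k)) w) = (f ^ (m + n (φ k))) w := by
      intro w; rw [zpow_add]; rfl
    rw [hcomp x, hcomp y]
    exact h _ (by linarith)
  have hq := hexp q.1 q.2 hqρ
  have : ε ≤ dist q.1 q.2 := le_of_tendsto_of_tendsto' tendsto_const_nhds (hzx.dist hzy)
    (fun k => hεu (φ k))
  rw [hq, dist_self] at this
  linarith

/-- For an expansive homeomorphism with expansivity constant `ρ`, the stable set
is exactly the set of points whose orbit is eventually `ρ`-close to that of `x` in the future,
and similarly for the unstable set in the past. -/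
theorem stmt_0 (f : Equiv.Perm M) (hf : Continuous ⇑f) (hf' : Continuous ⇑f.symm)
    (ρ : ℝ) (hρ : 0 < ρ) (hexp : IsExpansiveWith f ρ) (x : M) :
    stableSet f x =
      {y : M | ∃ N : ℤ, ∀ n : ℤ, N ≤ n → dist ((f ^ n) x) ((f ^ n) y) ≤ ρ} ∧
    unstableSet f x =
      {y : M | ∃ N : ℤ, ∀ n : ℤ, N ≤ n → dist ((f ^ (-n)) x) ((f ^ (-n)) y) ≤ ρ} := by
  have hcoe : ∀ n : ℤ, (f⁻¹ ^ n : Equiv.Perm M) = f ^ (-n) := by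
    intro n; rw [inv_zpow, ← zpow_neg]
  have hfi : Continuous ⇑(f⁻¹ : Equiv.Perm M) := hf'
  have hfi' : Continuous ⇑(f⁻¹ : Equiv.Perm M).symm := hf
  have hexp' : IsExpansiveWith f⁻¹ ρ := by
    intro a b hab
    refine hexp a b fun n => ?_
    have := hab (-n)
    rwa [hcoe, neg_neg] at this
  constructor
  · ext y
    constructor
    · intro hy
      have hev : ∀ᶠ n : ℤ in atTop, dist ((f ^ n) x) ((f ^ n) y) < ρ :=
        hy.eventually_lt_const hρ
      obtain ⟨N, hN⟩ := eventually_atTop.mp hev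
      exact ⟨N, fun n hn => (hN n hn).le⟩
    · rintro ⟨N, hN⟩
      exact key_tendsto f hf hf' ρ hexp x y N hN
  · ext y
    constructor
    · intro hy
      have hy' : Tendsto (fun n : ℤ => dist ((f ^ (-n)) x) ((f ^ (-n)) y)) atTop (𝓝 0) :=
        hy.comp tendsto_neg_atTop_atBot
      have hev : ∀ᶠ n : ℤ in atTop, dist ((f ^ (-n)) x) ((f ^ (-n)) y) < ρ :=
        hy'.eventually_lt_const hρ
      obtain ⟨N, hN⟩ := eventually_atTop.mp hev
      exact ⟨N, fun n hn => (hN n hn).le⟩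
    · rintro ⟨N, hN⟩
      have hN' : ∀ n : ℤ, N ≤ n → dist ((f⁻¹ ^ n) x) ((f⁻¹ ^ n) y) ≤ ρ := by
        intro n hn; rw [hcoe]; exact hN n hn
      have h1 := key_tendsto f⁻¹ hfi hfi' ρ hexp' x y N hN'
      have h2 : Tendsto (fun n : ℤ => dist ((f ^ n) x) ((f ^ n) y)) atBot (𝓝 0) := by
        have := h1.comp (tendsto_neg_atBot_atTop : Tendsto (fun n : ℤ => -n) atBot atTop)
        refine this.congr fun n => ?_
        simp only [Function.comp_apply, hcoe, neg_neg]
      exact h2
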